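/- Let Z be a commutative ring, P a prime ideal of Z, and V a Z-module of at most countable dimension over a field k ⊆ Z/P's base field such that V is torsion-free as a Z/P-module and Ann_Z(V) = P. Let X be the set of maximal ideals χ ⊇ P of Z with V/χV ≠ 0. Then the intersection over χ ∈ X of χV is zero; equivalently, the natural map V → ∏_{χ∈X} V/χV is injective. -/

import Mathlib

lemma aux_countable_closure {M : Type*} [CommMonoid M] {T : Set M} (hT : T.Countable) :
    (Submonoid.closure T : Set M).Countable := by
  haveI : Countable T := hT.to_subtype
  have hsub : (Submonoid.closure T : Set M) ⊆
      Set.range (fun l : List T => (l.map Subtype.val).prod) := by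
    intro x hx
    obtain ⟨l, hl, rfl⟩ := Submonoid.exists_list_of_mem_closure hx
    refine ⟨l.attach.map (fun y => ⟨y.1, hl y.1 y.2⟩), ?_⟩
    simp [List.map_map, Function.comp_def]
  exact (Set.countable_range _).mono hsub


open Cardinal in
lemma aux_exists_maximal_avoiding {A : Type*} [CommRing A] [IsDomain A] [Algebra ℂ A]
    (G : Set A) (hGc : G.Countable) (hGs : Submodule.span ℂ G = ⊤)
    (T : Set A) (hTc : T.Countable) (hT0 : (0 : A) ∉ T)
    (hSc : (Submonoid.closure T : Set A).Countable) :
    ∃ m : Ideal A, m.IsMaximal ∧ ∀ t ∈ T, t ∉ m := by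
  classical
  set S : Submonoid A := Submonoid.closure T with hS
  have hSnz : S ≤ nonZeroDivisors A := by
    rw [hS, Submonoid.closure_le]
    intro t ht
    exact mem_nonZeroDivisors_of_ne_zero (fun h => hT0 (h ▸ ht))
  set L' := Localization S with hL'
  haveI : IsDomain L' := IsLocalization.isDomain_of_le_nonZeroDivisors L' hSnz
  obtain ⟨M, hM⟩ := Ideal.exists_maximal L'
  haveI := hM
  letI : Algebra ℂ L' := ((algebraMap A L').comp (algebraMap ℂ A)).toAlgebra
  set L := L' ⧸ M with hLdef
  letI : Field L := Ideal.Quotient.field M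
  letI : Algebra ℂ L := Ideal.Quotient.algebra ℂ
  letI : Module ℂ L := Algebra.toModule
  -- the canonical ℂ-algebra hom A → L
  let f : A →ₐ[ℂ] L :=
    { toRingHom := (Ideal.Quotient.mk M).comp (algebraMap A L')
      commutes' := fun c => rfl }
  -- spanning set for L
  let g : A × A → L := fun p =>
    if h : p.2 ∈ S then Ideal.Quotient.mk M (IsLocalization.mk' L' p.1 (⟨p.2, h⟩ : S)) else 0
  have hLspan : Submodule.span ℂ (g '' (G ×ˢ (S : Set A))) = ⊤ := by
    rw [Submodule.eq_top_iff']
    intro x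
    obtain ⟨y, rfl⟩ := Ideal.Quotient.mk_surjective x
    obtain ⟨⟨a, s⟩, rfl⟩ := IsLocalization.mk'_surjective S y
    let φ : A →ₗ[ℂ] L := (LinearMap.mulRight ℂ
      (Ideal.Quotient.mk M (IsLocalization.mk' L' (1 : A) s))).comp f.toLinearMap
    have hφ : ∀ b : A, φ b = Ideal.Quotient.mk M (IsLocalization.mk' L' b s) := by
      intro b
      simp only [φ, LinearMap.comp_apply, LinearMap.mulRight_apply, AlgHom.toLinearMap_apply]
      show (Ideal.Quotient.mk M) ((algebraMap A L') b) * _ = _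
      rw [← map_mul, ← IsLocalization.mk'_eq_mul_mk'_one]
    have ha : a ∈ Submodule.span ℂ G := hGs ▸ Submodule.mem_top
    have h1 : φ a ∈ Submodule.map φ (Submodule.span ℂ G) := Submodule.mem_map_of_mem ha
    rw [Submodule.map_span] at h1
    rw [← hφ a]
    refine Submodule.span_mono ?_ h1
    rintro - ⟨b, hb, rfl⟩
    exact ⟨(b, (s : A)), ⟨hb, s.2⟩, by simp only [g, dif_pos s.2]; rw [hφ b]⟩
  -- rank bound
  have hrank : Module.rank ℂ L ≤ Cardinal.aleph0 := by
    have h1 := rank_span_le (R := ℂ) (g '' (G ×ˢ (S : Set A)))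
    rw [hLspan, rank_top] at h1
    refine h1.trans ?_
    rw [Cardinal.mk_le_aleph0_iff]
    exact ((hGc.prod hSc).image g).to_subtype
  -- algebraicity
  haveI halg : Algebra.IsAlgebraic ℂ L := by
    by_contra hnot
    rw [← Algebra.transcendental_iff_not_isAlgebraic] at hnot
    obtain ⟨x, hx⟩ := hnot.1
    have h2 := hx.linearIndependent_sub_inv.cardinal_lift_le_rank
    have h3 : (Cardinal.continuum : Cardinal) ≤ Cardinal.aleph0 := by
      have h4 := h2.trans (Cardinal.lift_le.mpr hrank)
      rw [mk_complex, Cardinal.lift_continuum, Cardinal.lift_aleph0] at h4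
      exact h4
    exact absurd h3 (not_le.mpr Cardinal.aleph0_lt_continuum)
  have hsurj : Function.Surjective (algebraMap ℂ L) :=
    by haveI : Algebra.IsIntegral ℂ L := Algebra.IsAlgebraic.isIntegral (K := ℂ) (A := L)
       exact IsAlgClosed.algebraMap_bijective_of_isIntegral.2
  have hinj : Function.Injective (algebraMap ℂ L) := (algebraMap ℂ L).injective
  let e : ℂ ≃+* L := RingEquiv.ofBijective (algebraMap ℂ L) ⟨hinj, hsurj⟩
  let ψ : A →+* ℂ := e.symm.toRingHom.comp ((Ideal.Quotient.mk M).comp (algebraMap A L'))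
  have hψs : Function.Surjective ψ := by
    intro c
    refine ⟨algebraMap ℂ A c, ?_⟩
    have : ((Ideal.Quotient.mk M).comp (algebraMap A L')) (algebraMap ℂ A c)
        = algebraMap ℂ L c := rfl
    show e.symm _ = c
    rw [this]
    exact e.symm_apply_apply c
  refine ⟨RingHom.ker ψ, RingHom.ker_isMaximal_of_surjective ψ hψs, ?_⟩
  intro t ht htK
  have htS : t ∈ S := Submonoid.subset_closure ht
  have hunit : IsUnit (algebraMap A L' t) := IsLocalization.map_units L' ⟨t, htS⟩
  have hunit2 : IsUnit (Ideal.Quotient.mk M (algebraMap A L' t)) := hunit.map _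
  have hne : Ideal.Quotient.mk M (algebraMap A L' t) ≠ 0 := hunit2.ne_zero
  apply hne
  have : ψ t = 0 := htK
  have := congrArg e this
  rw [map_zero] at this
  calc Ideal.Quotient.mk M (algebraMap A L' t)
      = e (e.symm (Ideal.Quotient.mk M (algebraMap A L' t))) := (e.apply_symm_apply _).symm
    _ = e (ψ t) := rfl
    _ = 0 := by rw [htK, map_zero]

/-- Lemma `ExistenceQuotient`.
Let `Z` be a finitely generated commutative `ℂ`-algebra, `P ⊆ Z` a prime ideal and `V` a
nonzero `Z`-module of at most countable `ℂ`-dimension which is annihilated by `P` and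
torsion-free over `Z/P` (so `Ann_Z(V) = P`).  Let `X` be the set of maximal ideals
`χ ⊇ P` with `V/χV ≠ 0`.  Then `⋂_{χ ∈ X} χV = 0`, i.e. the natural map
`V → ∏_{χ ∈ X} V/χV` is injective. -/
theorem inter_maximal_smul_eq_bot_of_countable_torsionFree
    (Z : Type*) [CommRing Z] [Algebra ℂ Z] (hfg : Algebra.FiniteType ℂ Z)
    (P : Ideal Z) (hP : P.IsPrime)
    (V : Type*) [AddCommGroup V] [Module ℂ V] [Module Z V] [IsScalarTower ℂ Z V]
    [Nontrivial V]
    (hcount : ∃ s : Set V, s.Countable ∧ Submodule.span ℂ s = ⊤)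
    (hann : ∀ z ∈ P, ∀ v : V, z • v = 0)
    (htf : ∀ z : Z, z ∉ P → ∀ v : V, v ≠ 0 → z • v ≠ 0) :
    ∀ v : V,
      (∀ χ : Ideal Z, χ.IsMaximal → P ≤ χ →
          χ • (⊤ : Submodule Z V) ≠ ⊤ → v ∈ χ • (⊤ : Submodule Z V)) →
      v = 0 := by
  classical
  intro v hv
  by_contra hv0
  haveI : IsDomain (Z ⧸ P) := (Ideal.Quotient.isDomain_iff_prime P).mpr hP
  have htors : Module.IsTorsionBySet Z V (P : Set Z) := fun x zp => hann zp.1 zp.2 x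
  letI : Module (Z ⧸ P) V := htors.module
  have hbr : ∀ (z : Z) (x : V), (Ideal.Quotient.mk P z) • x = z • x := htors.mk_smul
  have halg : ∀ c : ℂ, algebraMap ℂ (Z ⧸ P) c = Ideal.Quotient.mk P (algebraMap ℂ Z c) :=
    fun c => rfl
  haveI : IsScalarTower ℂ (Z ⧸ P) V := IsScalarTower.of_algebraMap_smul (fun c x => by
    rw [halg, hbr, algebraMap_smul])
  have htfA : ∀ (a : Z ⧸ P) (x : V), a ≠ 0 → x ≠ 0 → a • x ≠ 0 := by
    intro a x ha hx
    obtain ⟨z, rfl⟩ := Ideal.Quotient.mk_surjective a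
    rw [hbr]
    exact htf z (fun hz => ha (Ideal.Quotient.eq_zero_iff_mem.mpr hz)) x hx
  obtain ⟨s, hsc, hss⟩ := hcount
  obtain ⟨w, hw⟩ := (hsc.insert 0).exists_eq_range (Set.insert_nonempty _ _)
  have hwspan : Submodule.span ℂ (Set.range w) = ⊤ := by
    rw [← hw, Submodule.span_insert_zero, hss]
  set u : Option ℕ → V := fun o => o.elim v w with hu
  have huspan : Submodule.span (Z ⧸ P) (Set.range u) = ⊤ := by
    rw [Submodule.eq_top_iff']
    intro x
    have hx : x ∈ Submodule.span ℂ (Set.range w) := hwspan ▸ Submodule.mem_top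
    refine Submodule.span_induction ?_ ?_ ?_ ?_ hx
      (p := fun x _ => x ∈ Submodule.span (Z ⧸ P) (Set.range u))
    · rintro y ⟨n, rfl⟩
      exact Submodule.subset_span ⟨some n, rfl⟩
    · exact zero_mem _
    · intro y z _ _ hy hz; exact add_mem hy hz
    · intro c y _ hy
      rw [← algebraMap_smul (Z ⧸ P) c y]
      exact Submodule.smul_mem _ _ hy
  obtain ⟨I, hI, hImax⟩ := exists_maximal_linearIndepOn (Z ⧸ P) u
  have hrel : ∀ j : Option ℕ, ∃ c : Z ⧸ P, c ≠ 0 ∧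
      c • u j ∈ Submodule.span (Z ⧸ P) (u '' I) := by
    intro j
    by_cases hj : j ∈ I
    · exact ⟨1, one_ne_zero, by rw [one_smul]; exact Submodule.subset_span ⟨j, hj, rfl⟩⟩
    · exact hImax j hj
  choose a' ha'0 ha'span using hrel
  have hclosure_ne : ∀ c ∈ Submonoid.closure (Set.range a'), c ≠ 0 := by
    intro c hc
    refine nonZeroDivisors.ne_zero (Submonoid.closure_le.mpr ?_ hc)
    rintro - ⟨j, rfl⟩
    exact mem_nonZeroDivisors_of_ne_zero (ha'0 j)
  have hclear : ∀ y : V, ∃ c ∈ Submonoid.closure (Set.range a'),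
      c • y ∈ Submodule.span (Z ⧸ P) (u '' I) := by
    intro y
    have hy : y ∈ Submodule.span (Z ⧸ P) (Set.range u) := huspan ▸ Submodule.mem_top
    refine Submodule.span_induction ?_ ?_ ?_ ?_ hy
      (p := fun y _ => ∃ c ∈ Submonoid.closure (Set.range a'),
        c • y ∈ Submodule.span (Z ⧸ P) (u '' I))
    · rintro y ⟨j, rfl⟩
      exact ⟨a' j, Submonoid.subset_closure ⟨j, rfl⟩, ha'span j⟩
    · exact ⟨1, one_mem _, by rw [smul_zero]; exact zero_mem _⟩
    · rintro y z _ _ ⟨c₁, hc₁, hc₁s⟩ ⟨c₂, hc₂, hc₂s⟩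
      refine ⟨c₁ * c₂, mul_mem hc₁ hc₂, ?_⟩
      rw [smul_add]
      refine add_mem ?_ ?_
      · rw [mul_comm, mul_smul]; exact Submodule.smul_mem _ _ hc₁s
      · rw [mul_smul]; exact Submodule.smul_mem _ _ hc₂s
    · rintro r y _ ⟨c, hc, hcs⟩
      refine ⟨c, hc, ?_⟩
      rw [smul_comm]
      exact Submodule.smul_mem _ _ hcs
  obtain ⟨c₀, hc₀S, hc₀v⟩ := hclear v
  have himg : u '' I = Set.range (fun i : I => u i) := Set.image_eq_range _ _
  obtain ⟨d, hd⟩ := Finsupp.mem_span_range_iff_exists_finsupp.mp (himg ▸ hc₀v)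
  have hdne : d ≠ 0 := by
    rintro rfl
    rw [Finsupp.sum_zero_index] at hd
    exact htfA c₀ v (hclosure_ne _ hc₀S) hv0 hd.symm
  obtain ⟨i₀, hi₀⟩ : ∃ i, d i ≠ 0 := by
    by_contra h
    push_neg at h
    exact hdne (Finsupp.ext h)
  -- the avoid set
  set T : Set (Z ⧸ P) := Set.range a' ∪ {d i₀} with hT
  have hTc : T.Countable := (Set.countable_range a').union (Set.countable_singleton _)
  have hT0 : (0 : Z ⧸ P) ∉ T := by
    rintro (⟨j, hj⟩ | h)
    · exact ha'0 j hj
    · exact hi₀ (Set.mem_singleton_iff.mp h).symm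
  have hAspan : ∃ G : Set (Z ⧸ P), G.Countable ∧ Submodule.span ℂ G = ⊤ := by
    haveI hftA : Algebra.FiniteType ℂ (Z ⧸ P) :=
      hfg.of_surjective (Ideal.Quotient.mkₐ ℂ P) (Ideal.Quotient.mkₐ_surjective ℂ P)
    obtain ⟨t, ht⟩ := hftA.out
    refine ⟨(Submonoid.closure (t : Set (Z ⧸ P)) : Set (Z ⧸ P)),
      aux_countable_closure t.countable_toSet, ?_⟩
    have := Algebra.adjoin_eq_span ℂ (t : Set (Z ⧸ P))
    rw [ht] at this
    rw [← this]
    rfl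
  obtain ⟨G, hGc, hGs⟩ := hAspan
  obtain ⟨m, hm, hmT⟩ := aux_exists_maximal_avoiding G hGc hGs T hTc hT0
    (aux_countable_closure hTc)
  set χ : Ideal Z := Ideal.comap (Ideal.Quotient.mk P) m with hχ
  have hχmax : χ.IsMaximal :=
    Ideal.comap_isMaximal_of_surjective _ Ideal.Quotient.mk_surjective
  have hPχ : P ≤ χ := by
    intro z hz
    show Ideal.Quotient.mk P z ∈ m
    rw [Ideal.Quotient.eq_zero_iff_mem.mpr hz]
    exact m.zero_mem
  have hmem : v ∉ χ • (⊤ : Submodule Z V) := by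
    intro hvmem
    have hspanid : (⊤ : Submodule Z V) = Submodule.span Z (Set.range (id : V → V)) := by
      rw [Set.range_id, Submodule.span_univ]
    rw [hspanid] at hvmem
    obtain ⟨μ, hμm, hμs⟩ := (Submodule.mem_ideal_smul_span_iff_exists_sum χ id v).mp hvmem
    choose cy hcyS hcyspan using hclear
    set q : Z ⧸ P := ∏ y ∈ μ.support, cy y with hq
    have hqS : q ∈ Submonoid.closure (Set.range a') :=
      Submonoid.prod_mem _ (fun y _ => hcyS y)
    have hmain : q • (c₀ • v) ∈ m • Submodule.span (Z ⧸ P) (u '' I) := by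
      have h1 : q • v ∈ m • Submodule.span (Z ⧸ P) (u '' I) := by
        rw [← hμs, Finsupp.sum, Finset.smul_sum]
        refine Submodule.sum_mem _ (fun y hy => ?_)
        have heq : q • (μ y • id y) = (Ideal.Quotient.mk P (μ y)) • (q • y) := by
          rw [hbr, id_eq, smul_comm]
        rw [heq]
        refine Submodule.smul_mem_smul (hμm y) ?_
        rw [hq, ← Finset.prod_erase_mul _ _ hy, mul_smul]
        exact Submodule.smul_mem _ _ (hcyspan y)
      have h2 := Submodule.smul_mem (m • Submodule.span (Z ⧸ P) (u '' I)) c₀ h1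
      rwa [smul_smul, mul_comm, ← smul_smul] at h2
    rw [himg] at hmain
    obtain ⟨e, hem, hes⟩ :=
      (Submodule.mem_ideal_smul_span_iff_exists_sum m (fun i : I => u i) _).mp hmain
    have hcomb : Finsupp.linearCombination (Z ⧸ P) (fun i : I => u i) (q • d - e) = 0 := by
      rw [map_sub, map_smul]
      have ht1 : Finsupp.linearCombination (Z ⧸ P) (fun i : I => u i) d = c₀ • v := by
        rw [Finsupp.linearCombination_apply]; exact hd
      have ht2 : Finsupp.linearCombination (Z ⧸ P) (fun i : I => u i) e = q • (c₀ • v) := by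
        rw [Finsupp.linearCombination_apply]; exact hes
      rw [ht1, ht2, sub_self]
    have hqd : q • d = e := by
      have := linearIndependent_iff.mp hI _ hcomb
      exact sub_eq_zero.mp this
    have hqdi : q * d i₀ ∈ m := by
      have := congrArg (fun f : I →₀ (Z ⧸ P) => f i₀) hqd
      simp only [Finsupp.smul_apply, smul_eq_mul] at this
      rw [this]
      exact hem i₀
    rcases hm.isPrime.mem_or_mem hqdi with h | h
    · haveI := hm.isPrime
      have hle : Submonoid.closure (Set.range a') ≤ m.primeCompl := by
        rw [Submonoid.closure_le]
        rintro - ⟨j, rfl⟩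
        exact hmT (a' j) (Or.inl ⟨j, rfl⟩)
      exact hle hqS h
    · exact hmT (d i₀) (Or.inr rfl) h
  by_cases htop : χ • (⊤ : Submodule Z V) = ⊤
  · exact hmem (by rw [htop]; exact Submodule.mem_top)
  · exact hmem (hv χ hχmax hPχ htop)
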